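/- The Nisio semigroup 𝒮 of (𝒫, f) is the semigroup envelope of (𝒫, f): (i) 𝒮(t)u₀ ≥ S_q(t)u₀ for all t ≥ 0, u₀ ∈ ℝ^d and q ∈ 𝒫; and (ii) for every other semigroup 𝒯 = (𝒯(t))_{t≥0} of maps ℝ^d → ℝ^d satisfying 𝒯(0) = id, 𝒯(s+t) = 𝒯(s)∘𝒯(t), each 𝒯(t) monotone, and 𝒯(t)u₀ ≥ S_q(t)u₀ for all q ∈ 𝒫, t ≥ 0, u₀, one has 𝒮(t)u₀ ≤ 𝒯(t)u₀ for all t ≥ 0 and u₀. -/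

import Mathlib

def IsQMatrix {d : ℕ} (q : Matrix (Fin d) (Fin d) ℝ) : Prop :=
  (∀ i, q i i ≤ 0) ∧ (∀ i j, i ≠ j → 0 ≤ q i j) ∧ (∀ i, ∑ j, q i j = 0)

/-- The affine semigroup `S_q(t)u₀ = e^{tq}u₀ + ∫₀^t e^{sq} f ds`. -/
noncomputable def Sq {d : ℕ} (q : Matrix (Fin d) (Fin d) ℝ) (f : Fin d → ℝ)
    (t : ℝ) (u : Fin d → ℝ) : Fin d → ℝ :=
  (NormedSpace.exp (t • q)).mulVec u +
    ∫ s in (0 : ℝ)..t, (NormedSpace.exp (s • q)).mulVec f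

/-- The one-step operator `ℰ_h u = sup_{q ∈ P} S_q(h)u` (componentwise sup). -/
noncomputable def Eop {d : ℕ} (P : Set (Matrix (Fin d) (Fin d) ℝ))
    (f : Matrix (Fin d) (Fin d) ℝ → Fin d → ℝ) (h : ℝ) (u : Fin d → ℝ) :
    Fin d → ℝ :=
  fun i => sSup ((fun q => Sq q (f q) h u i) '' P)

/-- Successive gaps `[t₁ - t₀, …, t_m - t_{m-1}]` of a list `[t₀, …, t_m]`. -/
def listGaps (l : List ℝ) : List ℝ := l.tail.zipWith (· - ·) l

/-- The iterated operator `ℰ_π = ℰ_{t₁-t₀} ∘ … ∘ ℰ_{t_m - t_{m-1}}` associated to a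
finite partition `π = {t₀ < t₁ < … < t_m}`. -/
noncomputable def Epart {d : ℕ} (E : ℝ → (Fin d → ℝ) → (Fin d → ℝ))
    (pa : Finset ℝ) : (Fin d → ℝ) → (Fin d → ℝ) :=
  ((listGaps (pa.sort (· ≤ ·))).map E).foldr (· ∘ ·) id

/-- Finite partitions of `[0, t]` containing `0` and `t`. -/
def partitionsTo (t : ℝ) : Set (Finset ℝ) :=
  {pa | (0 : ℝ) ∈ pa ∧ t ∈ pa ∧ ∀ s ∈ pa, s ∈ Set.Icc (0 : ℝ) t}

/-- The Nisio semigroup `𝒮(t)u = sup_{π ∈ P_t} ℰ_π u` (componentwise sup). -/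
noncomputable def NisioS {d : ℕ} (P : Set (Matrix (Fin d) (Fin d) ℝ))
    (f : Matrix (Fin d) (Fin d) ℝ → Fin d → ℝ) (t : ℝ) (u : Fin d → ℝ) :
    Fin d → ℝ :=
  fun i => sSup ((fun pa => Epart (Eop P f) pa u i) '' partitionsTo t)

lemma Sq_zero {d : ℕ} (q : Matrix (Fin d) (Fin d) ℝ) (f : Fin d → ℝ)
    (u : Fin d → ℝ) : Sq q f 0 u = u := by
  unfold Sq
  simp [zero_smul, NormedSpace.exp_zero, Matrix.one_mulVec,
    intervalIntegral.integral_same]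

lemma listGaps_cons_cons (a b : ℝ) (l : List ℝ) :
    listGaps (a :: b :: l) = (b - a) :: listGaps (b :: l) := rfl

lemma listGaps_sum : ∀ (l : List ℝ) (h : l ≠ []),
    (listGaps l).sum = l.getLast h - l.head h := by
  intro l
  induction l with
  | nil => intro h; exact absurd rfl h
  | cons a l ih =>
    intro _
    cases l with
    | nil => simp [listGaps]
    | cons b l' =>
      rw [listGaps_cons_cons, List.sum_cons, ih (by simp)]
      simp [List.getLast_cons]
      try ring

lemma listGaps_nonneg : ∀ (l : List ℝ), l.Chain' (· ≤ ·) →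
    ∀ x ∈ listGaps l, 0 ≤ x := by
  intro l
  induction l with
  | nil => intro _ x hx; simp [listGaps] at hx
  | cons a l ih =>
    intro hc x hx
    cases l with
    | nil => simp [listGaps] at hx
    | cons b l' =>
      rw [listGaps_cons_cons] at hx
      rcases List.mem_cons.1 hx with h | h
      · have := (List.isChain_cons_cons.1 hc).1
        simpa [h] using sub_nonneg.2 this
      · exact ih (List.isChain_cons_cons.1 hc).2 x h

lemma sorted_head_eq_min {l : List ℝ} (hs : l.Pairwise (· ≤ ·)) (h : l ≠ [])
    {x : ℝ} (hx : x ∈ l) : l.head h ≤ x := by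
  cases l with
  | nil => exact absurd rfl h
  | cons a l' =>
    rcases List.mem_cons.1 hx with h | h
    · simp [h]
    · exact (List.pairwise_cons.1 hs).1 x h

lemma sorted_getLast_eq_max : ∀ {l : List ℝ}, l.Pairwise (· ≤ ·) → ∀ (h : l ≠ []),
    ∀ {x : ℝ}, x ∈ l → x ≤ l.getLast h := by
  intro l
  induction l with
  | nil => intro _ h; exact absurd rfl h
  | cons a l' ih =>
    intro hs _ x hx
    cases l' with
    | nil => simp at hx; simp [hx]
    | cons b l'' =>
      rw [List.getLast_cons (by simp)]
      rcases List.mem_cons.1 hx with h | h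
      · subst h
        exact le_trans ((List.pairwise_cons.1 hs).1 b (by simp))
          (ih (List.pairwise_cons.1 hs).2 (by simp) (by simp))
      · exact ih (List.pairwise_cons.1 hs).2 (by simp) h

/-- The Nisio semigroup is the semigroup envelope of `(P, f)`: it dominates every
`S_q`, and it is the smallest monotone semigroup doing so. -/
theorem nisio_is_semigroup_envelope {d : ℕ} (hd : 0 < d)
    (P : Set (Matrix (Fin d) (Fin d) ℝ)) (hne : P.Nonempty)
    (hQ : ∀ q ∈ P, IsQMatrix q)
    (f : Matrix (Fin d) (Fin d) ℝ → Fin d → ℝ)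
    (hf0 : ∀ q ∈ P, f q ≤ 0)
    (hq₀ : ∃ q₀ ∈ P, f q₀ = 0)
    (hEfin : ∀ h : ℝ, 0 ≤ h → ∀ (u : Fin d → ℝ) (i : Fin d),
      BddAbove ((fun q => Sq q (f q) h u i) '' P))
    (hSfin : ∀ t : ℝ, 0 ≤ t → ∀ (u : Fin d → ℝ) (i : Fin d),
      BddAbove ((fun pa => Epart (Eop P f) pa u i) '' partitionsTo t)) :
    (∀ t : ℝ, 0 ≤ t → ∀ u : Fin d → ℝ, ∀ q ∈ P,
      Sq q (f q) t u ≤ NisioS P f t u) ∧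
    (∀ T : ℝ → (Fin d → ℝ) → (Fin d → ℝ),
      (∀ u : Fin d → ℝ, T 0 u = u) →
      (∀ s t : ℝ, 0 ≤ s → 0 ≤ t → ∀ u : Fin d → ℝ, T (s + t) u = T s (T t u)) →
      (∀ t : ℝ, 0 ≤ t → ∀ u v : Fin d → ℝ, u ≤ v → T t u ≤ T t v) →
      (∀ t : ℝ, 0 ≤ t → ∀ u : Fin d → ℝ, ∀ q ∈ P, Sq q (f q) t u ≤ T t u) →
      ∀ t : ℝ, 0 ≤ t → ∀ u : Fin d → ℝ, NisioS P f t u ≤ T t u) := by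
  constructor
  · -- (i) domination
    intro t ht u q hq
    rcases eq_or_lt_of_le ht with h0 | h0
    · -- t = 0
      subst h0
      intro i
      have hmem : ({0} : Finset ℝ) ∈ partitionsTo (0 : ℝ) := by
        refine ⟨by simp, by simp, ?_⟩
        intro s hs
        simp at hs
        simp [hs]
      have hEp : Epart (Eop P f) {0} u = u := by
        simp [Epart, Finset.sort_singleton, listGaps]
      rw [Sq_zero]
      exact le_csSup (hSfin 0 le_rfl u i) ⟨{0}, hmem, congrFun hEp i⟩
    · -- 0 < t
      intro i
      have hsort : (({0, t} : Finset ℝ).sort (· ≤ ·)) = [0, t] := by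
        rw [Finset.sort_insert (r := (· ≤ ·))
          (fun b hb => by simp at hb; simp [hb, le_of_lt h0])
          (by simp [ne_of_lt h0]), Finset.sort_singleton]
      have hEp : Epart (Eop P f) {0, t} u = Eop P f t u := by
        simp [Epart, hsort, listGaps]
      have hmem : ({0, t} : Finset ℝ) ∈ partitionsTo t := by
        refine ⟨by simp, by simp, ?_⟩
        intro s hs
        simp at hs
        rcases hs with h | h <;> simp [h, le_of_lt h0, le_refl]
      have h1 : Sq q (f q) t u i ≤ Eop P f t u i :=
        le_csSup (hEfin t ht u i) ⟨q, hq, rfl⟩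
      refine h1.trans ?_
      exact le_csSup (hSfin t ht u i) ⟨{0, t}, hmem, congrFun hEp i⟩
  · -- (ii) minimality
    intro T hT0 hTadd hTmono hTdom t ht u
    have hE_le : ∀ h : ℝ, 0 ≤ h → ∀ v : Fin d → ℝ, Eop P f h v ≤ T h v := by
      intro h hh v i
      refine csSup_le (hne.image _) ?_
      rintro x ⟨q, hq, rfl⟩
      exact hTdom h hh v q hq i
    have hfoldr : ∀ l : List ℝ, (∀ x ∈ l, 0 ≤ x) → ∀ v : Fin d → ℝ,
        ((l.map (Eop P f)).foldr (· ∘ ·) id) v ≤ T l.sum v := by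
      intro l
      induction l with
      | nil => intro _ v; simp [hT0 v]
      | cons h l ih =>
        intro hpos v
        have h0 : 0 ≤ h := hpos h (by simp)
        have hl : ∀ x ∈ l, 0 ≤ x := fun x hx => hpos x (by simp [hx])
        have hsum : 0 ≤ l.sum := List.sum_nonneg hl
        calc ((List.map (Eop P f) (h :: l)).foldr (· ∘ ·) id) v
            = Eop P f h (((l.map (Eop P f)).foldr (· ∘ ·) id) v) := rfl
          _ ≤ T h (((l.map (Eop P f)).foldr (· ∘ ·) id) v) := hE_le h h0 _
          _ ≤ T h (T l.sum v) := hTmono h h0 _ _ (ih hl v)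
          _ = T (h + l.sum) v := (hTadd h l.sum h0 hsum v).symm
          _ = T (h :: l).sum v := by rw [List.sum_cons]
    intro i
    refine csSup_le ?_ ?_
    · refine ⟨_, ⟨{0, t}, ?_, rfl⟩⟩
      refine ⟨by simp, by simp, ?_⟩
      intro s hs
      simp at hs
      rcases hs with h | h <;> simp [h, ht, le_refl]
    · rintro x ⟨pa, hpa, rfl⟩
      set l := pa.sort (· ≤ ·) with hl
      have hlne : l ≠ [] := by
        intro hnil
        have h0m : (0 : ℝ) ∈ l := (Finset.mem_sort _).2 hpa.1
        rw [hnil] at h0m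
        exact absurd h0m List.not_mem_nil
      have hsorted : l.Pairwise (· ≤ ·) := Finset.pairwise_sort _ _
      have hhead : l.head hlne = 0 := by
        have h1 : l.head hlne ∈ pa := (Finset.mem_sort _).1 (List.head_mem hlne)
        have h2 : 0 ≤ l.head hlne := (hpa.2.2 _ h1).1
        have h3 : l.head hlne ≤ 0 :=
          sorted_head_eq_min hsorted hlne ((Finset.mem_sort _).2 hpa.1)
        linarith
      have hlast : l.getLast hlne = t := by
        have h1 : l.getLast hlne ∈ pa := (Finset.mem_sort _).1 (List.getLast_mem hlne)
        have h2 : l.getLast hlne ≤ t := (hpa.2.2 _ h1).2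
        have h3 : t ≤ l.getLast hlne :=
          sorted_getLast_eq_max hsorted hlne ((Finset.mem_sort _).2 hpa.2.1)
        linarith
      have hgsum : (listGaps l).sum = t := by
        rw [listGaps_sum l hlne, hhead, hlast, sub_zero]
      have hgnn : ∀ x ∈ listGaps l, 0 ≤ x :=
        listGaps_nonneg l (List.isChain_iff_pairwise.2 hsorted)
      have := hfoldr (listGaps l) hgnn u i
      rw [hgsum] at this
      exact this
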